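/- Let G₀ be a finite simple graph with distinct vertices hstart and hend, and let G be the graph obtained from G₀ by adjoining two new vertices vIN and vOUT together with the two new edges {vIN, hstart} and {hend, vOUT}. Then G₀ has a Hamiltonian path from hstart to hend if and only if G has a Hamiltonian path from vIN to vOUT. -/

import Mathlib

section Aux

variable {V : Type*} (G₀ : SimpleGraph V) (hstart hend : V)

private def auxRel (G₀ : SimpleGraph V) (hstart hend : V) : V ⊕ Bool → V ⊕ Bool → Prop :=
  fun x y =>
    (∃ a b : V, x = Sum.inl a ∧ y = Sum.inl b ∧ G₀.Adj a b) ∨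
    (x = Sum.inr false ∧ y = Sum.inl hstart) ∨
    (x = Sum.inl hend ∧ y = Sum.inr true)

private lemma aux_adj_inl {a b : V} :
    (SimpleGraph.fromRel (auxRel G₀ hstart hend)).Adj (Sum.inl a) (Sum.inl b) ↔ G₀.Adj a b := by
  rw [SimpleGraph.fromRel_adj]
  simp only [auxRel]
  constructor
  · rintro ⟨-, (⟨a', b', ha, hb, hadj⟩ | ⟨h1, -⟩ | ⟨-, h2⟩) |
      (⟨a', b', ha, hb, hadj⟩ | ⟨h1, -⟩ | ⟨-, h2⟩)⟩
    · obtain rfl := Sum.inl.inj ha; obtain rfl := Sum.inl.inj hb; exact hadj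
    · exact absurd h1 (by simp)
    · exact absurd h2 (by simp)
    · obtain rfl := Sum.inl.inj ha; obtain rfl := Sum.inl.inj hb; exact hadj.symm
    · exact absurd h1 (by simp)
    · exact absurd h2 (by simp)
  · intro h
    exact ⟨by simp [h.ne], Or.inl (Or.inl ⟨a, b, rfl, rfl, h⟩)⟩

private lemma aux_adj_inrf {x : V ⊕ Bool} :
    (SimpleGraph.fromRel (auxRel G₀ hstart hend)).Adj (Sum.inr false) x → x = Sum.inl hstart := by
  rw [SimpleGraph.fromRel_adj]
  simp only [auxRel]
  rintro ⟨-, (⟨a', b', ha, hb, hadj⟩ | ⟨-, h⟩ | ⟨h, -⟩) |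
    (⟨a', b', ha, hb, hadj⟩ | ⟨h, h'⟩ | ⟨-, h⟩)⟩ <;> simp_all

private lemma aux_adj_inrt {x : V ⊕ Bool} :
    (SimpleGraph.fromRel (auxRel G₀ hstart hend)).Adj (Sum.inr true) x → x = Sum.inl hend := by
  rw [SimpleGraph.fromRel_adj]
  simp only [auxRel]
  rintro ⟨-, (⟨a', b', ha, hb, hadj⟩ | ⟨h, -⟩ | ⟨h, h'⟩) |
    (⟨a', b', ha, hb, hadj⟩ | ⟨-, h⟩ | ⟨h, -⟩)⟩ <;> simp_all

/-- Any walk in the augmented graph whose support uses only `inl` vertices comes from a walk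
in `G₀`. -/
private lemma aux_unmap {x y : V ⊕ Bool}
    (w : (SimpleGraph.fromRel (auxRel G₀ hstart hend)).Walk x y) :
    ∀ a b : V, x = Sum.inl a → y = Sum.inl b →
      (∀ v ∈ w.support, ∃ u : V, v = Sum.inl u) →
      ∃ p : G₀.Walk a b, p.support.map Sum.inl = w.support := by
  induction w with
  | nil =>
    intro a b ha hb _
    subst ha
    obtain rfl := Sum.inl.inj hb
    exact ⟨SimpleGraph.Walk.nil, by simp⟩
  | @cons u z v h w ih =>
    intro a b ha hb hmem
    have hz : z ∈ (SimpleGraph.Walk.cons h w).support := by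
      rw [SimpleGraph.Walk.support_cons]
      exact List.mem_cons_of_mem _ w.start_mem_support
    obtain ⟨c, hc⟩ := hmem z hz
    subst ha hc
    have hadj : G₀.Adj a c := (aux_adj_inl G₀ hstart hend).mp h
    obtain ⟨p, hp⟩ := ih c b rfl hb (fun v hv => hmem v (by
      rw [SimpleGraph.Walk.support_cons]; exact List.mem_cons_of_mem _ hv))
    exact ⟨SimpleGraph.Walk.cons hadj p, by simp [hp]⟩

end Aux

/-- Let `G` be the graph obtained from `G₀` by adjoining two new vertices
`vIN = Sum.inr false` and `vOUT = Sum.inr true` together with the two new edges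
`{vIN, hstart}` and `{hend, vOUT}`. Then `G₀` has a Hamiltonian path from `hstart` to `hend`
iff `G` has a Hamiltonian path from `vIN` to `vOUT`. -/
theorem augmented_hamiltonian_path_iff
    {V : Type*} [Fintype V] [DecidableEq V]
    (G₀ : SimpleGraph V) (hstart hend : V) (hne : hstart ≠ hend)
    (G : SimpleGraph (V ⊕ Bool))
    (hG : G = SimpleGraph.fromRel (fun x y =>
      (∃ a b : V, x = Sum.inl a ∧ y = Sum.inl b ∧ G₀.Adj a b) ∨
      (x = Sum.inr false ∧ y = Sum.inl hstart) ∨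
      (x = Sum.inl hend ∧ y = Sum.inr true))) :
    (∃ p : G₀.Walk hstart hend, p.IsHamiltonian) ↔
    (∃ q : G.Walk (Sum.inr false) (Sum.inr true), q.IsHamiltonian) := by
  have hG' : G = SimpleGraph.fromRel (auxRel G₀ hstart hend) := hG
  subst hG'
  have hinj : Function.Injective (Sum.inl : V → V ⊕ Bool) := Sum.inl_injective
  constructor
  · rintro ⟨p, hp⟩
    -- map `p` into the augmented graph and extend by the two new edges
    let f : G₀ →g SimpleGraph.fromRel (auxRel G₀ hstart hend) :=
      ⟨Sum.inl, fun h => (aux_adj_inl G₀ hstart hend).mpr h⟩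
    have h0 : (SimpleGraph.fromRel (auxRel G₀ hstart hend)).Adj (Sum.inr false)
        (Sum.inl hstart) := by
      rw [SimpleGraph.fromRel_adj]
      exact ⟨by simp, Or.inl (Or.inr (Or.inl ⟨rfl, rfl⟩))⟩
    have h1 : (SimpleGraph.fromRel (auxRel G₀ hstart hend)).Adj (Sum.inl hend)
        (Sum.inr true) := by
      rw [SimpleGraph.fromRel_adj]
      exact ⟨by simp, Or.inl (Or.inr (Or.inr ⟨rfl, rfl⟩))⟩
    refine ⟨SimpleGraph.Walk.cons h0 ((p.map f).concat h1), ?_⟩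
    have hsupp : (SimpleGraph.Walk.cons h0 ((p.map f).concat h1)).support =
        Sum.inr false :: (p.support.map Sum.inl ++ [Sum.inr true]) := by
      rw [SimpleGraph.Walk.support_cons, SimpleGraph.Walk.support_concat,
        SimpleGraph.Walk.support_map]
      rfl
    have hnotin : ∀ b' : Bool, (Sum.inr b' : V ⊕ Bool) ∉ p.support.map Sum.inl := by
      intro b' hmem
      simp only [List.mem_map] at hmem
      obtain ⟨u, -, hu⟩ := hmem
      exact absurd hu (by simp)
    have hnodup : (SimpleGraph.Walk.cons h0 ((p.map f).concat h1)).support.Nodup := by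
      rw [hsupp]
      refine List.nodup_cons.mpr ⟨?_, ?_⟩
      · simp only [List.mem_append, List.mem_singleton]
        rintro (h | h)
        · exact hnotin false h
        · exact absurd h (by simp)
      · refine List.nodup_append'.mpr ⟨?_, List.nodup_singleton _, ?_⟩
        · exact (hp.isPath.support_nodup).map hinj
        · intro x hx hx'
          rw [List.mem_singleton] at hx'
          subst hx'
          exact hnotin true hx
    refine (SimpleGraph.Walk.IsPath.mk' hnodup).isHamiltonian_of_mem ?_
    intro x
    rw [hsupp]
    match x with
    | Sum.inl v =>
      exact List.mem_cons_of_mem _ (List.mem_append_left _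
        (List.mem_map.mpr ⟨v, hp.mem_support v, rfl⟩))
    | Sum.inr false => exact List.mem_cons_self
    | Sum.inr true =>
      exact List.mem_cons_of_mem _ (List.mem_append_right _ (List.mem_singleton_self _))
  · rintro ⟨q, hq⟩
    -- peel off the first edge
    obtain ⟨z, h0, q₁, rfl⟩ := SimpleGraph.Walk.exists_eq_cons_of_ne (by simp) q
    obtain rfl : z = Sum.inl hstart := aux_adj_inrf G₀ hstart hend h0
    -- peel off the last edge (first edge of the reversed walk)
    obtain ⟨z', h1, q₂, hq₂⟩ := SimpleGraph.Walk.exists_eq_cons_of_ne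
      (by simp) q₁.reverse
    obtain rfl : z' = Sum.inl hend := aux_adj_inrt G₀ hstart hend h1
    set w := q₂.reverse with hw
    have hsupp : q₁.support = w.support ++ [Sum.inr true] := by
      have h2 : q₁.reverse.support = Sum.inr true :: q₂.support := by
        rw [hq₂, SimpleGraph.Walk.support_cons]
      have h3 := congrArg List.reverse h2
      rw [SimpleGraph.Walk.support_reverse, List.reverse_reverse] at h3
      rw [h3, hw, SimpleGraph.Walk.support_reverse]
      simp
    have hqsupp : (SimpleGraph.Walk.cons h0 q₁).support =
        Sum.inr false :: (w.support ++ [Sum.inr true]) := by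
      rw [SimpleGraph.Walk.support_cons, hsupp]
    have hnodup := hq.isPath.support_nodup
    rw [hqsupp, List.nodup_cons] at hnodup
    obtain ⟨hnf, happ⟩ := hnodup
    rw [List.nodup_append'] at happ
    obtain ⟨hwnodup, -, hdisj⟩ := happ
    have hwf : (Sum.inr false : V ⊕ Bool) ∉ w.support := fun hmem =>
      hnf (List.mem_append_left _ hmem)
    have hwt : (Sum.inr true : V ⊕ Bool) ∉ w.support := fun hmem =>
      hdisj hmem (List.mem_singleton_self _)
    have hmem : ∀ v ∈ w.support, ∃ u : V, v = Sum.inl u := by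
      rintro (u | b) hv
      · exact ⟨u, rfl⟩
      · cases b
        · exact absurd hv hwf
        · exact absurd hv hwt
    obtain ⟨p, hpmap⟩ := aux_unmap G₀ hstart hend w hstart hend rfl rfl hmem
    have hpnodup : p.support.Nodup := List.Nodup.of_map Sum.inl (hpmap ▸ hwnodup)
    refine ⟨p, (SimpleGraph.Walk.IsPath.mk' hpnodup).isHamiltonian_of_mem ?_⟩
    intro v
    have hv : (Sum.inl v : V ⊕ Bool) ∈ (SimpleGraph.Walk.cons h0 q₁).support :=
      hq.mem_support _
    rw [hqsupp] at hv
    rcases List.mem_cons.mp hv with h | h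
    · exact absurd h (by simp)
    rcases List.mem_append.mp h with h | h
    · rw [← hpmap] at h
      obtain ⟨u, hu, hu'⟩ := List.mem_map.mp h
      obtain rfl := hinj hu'
      exact hu
    · exact absurd (List.mem_singleton.mp h) (by simp)
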